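/- Let n and m be natural numbers with 1 ≤ m ≤ 2^n − 1, let θ = Real.arccos (Real.sqrt (m / 2^n)), let x = 1 − θ/π, and let l = ⌈n/2⌉ + 3 (in Lean, (n+1)/2 + 3). Then there exists a natural number i with 2 ≤ i ≤ l such that ⌊2^i · x⌋ is odd; i.e., the binary expansion of x = (2π − 2θ)/(2π) has a digit equal to 1 in some position between 2 and l. -/

import Mathlib

lemma digit_lemma (x : ℝ) (L : ℕ) (hL : 2 ≤ L) (hx1 : x < 1)
    (hx0 : (2:ℝ)^(L-1) + 1 ≤ 2^L * x) :
    ∃ i : ℕ, 2 ≤ i ∧ i ≤ L ∧ Odd ⌊(2:ℝ)^i * x⌋ := by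
  by_contra hc
  push_neg at hc
  have heven : ∀ i, 2 ≤ i → i ≤ L → Even ⌊(2:ℝ)^i * x⌋ := fun i h1 h2 =>
    Int.not_odd_iff_even.mp (hc i h1 h2)
  have hxhalf : (1:ℝ)/2 ≤ x := by
    have h2L : (2:ℝ)^L = 2 * 2^(L-1) := by
      rw [← pow_succ']
      congr 1
      omega
    nlinarith [pow_pos (by norm_num : (0:ℝ) < 2) (L-1)]
  have key : ∀ k, 1 + k ≤ L → ⌊(2:ℝ)^(1+k) * x⌋ = 2^k := by
    intro k
    induction k with
    | zero =>
      intro _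
      have : ⌊(2:ℝ)^(1+0) * x⌋ = (1:ℤ) := by
        rw [Int.floor_eq_iff]
        constructor
        · push_cast; nlinarith
        · push_cast; nlinarith
      simpa using this
    | succ k ih =>
      intro hk
      have IH := ih (by omega)
      have hlb : ((2:ℝ)^k : ℝ) ≤ 2^(1+k) * x := by
        have := Int.floor_le ((2:ℝ)^(1+k) * x)
        rw [IH] at this
        push_cast at this
        linarith
      have hub : (2:ℝ)^(1+k) * x < 2^k + 1 := by
        have := Int.lt_floor_add_one ((2:ℝ)^(1+k) * x)
        rw [IH] at this
        push_cast at this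
        linarith
      have hpow : (2:ℝ)^(1+(k+1)) * x = 2 * ((2:ℝ)^(1+k) * x) := by ring
      have hps' : (2:ℝ)^(k+1) = 2 * 2^k := by ring
      have hF1 : (2:ℤ)^(k+1) ≤ ⌊(2:ℝ)^(1+(k+1)) * x⌋ := by
        apply Int.le_floor.mpr
        rw [hpow]
        push_cast
        rw [hps']
        linarith
      have hF2 : ⌊(2:ℝ)^(1+(k+1)) * x⌋ < 2^(k+1) + 2 := by
        apply Int.floor_lt.mpr
        rw [hpow]
        push_cast
        rw [hps']
        linarith
      obtain ⟨r, hr⟩ := heven (1+(k+1)) (by omega) (by omega)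
      have hps : (2:ℤ)^(k+1) = 2 * 2^k := by ring
      set A := (2:ℤ)^k with hA
      set F := ⌊(2:ℝ)^(1+(k+1)) * x⌋ with hF
      rw [hps] at hF1 hF2 ⊢
      omega
  have hLfloor := key (L-1) (by omega)
  have hLeq : 1 + (L-1) = L := by omega
  rw [hLeq] at hLfloor
  have hcon : (2:ℤ)^(L-1) + 1 ≤ ⌊(2:ℝ)^L * x⌋ := by
    apply Int.le_floor.mpr
    push_cast
    linarith
  rw [hLfloor] at hcon
  omega

/-- If a hyperplane misclassifies m of the 2^n data points with
1 ≤ m ≤ 2^n − 1, then the binary expansion of x = (2π − 2θ)/(2π) = 1 − θ/π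
has a digit equal to 1 in some position between 2 and l = ⌈n/2⌉ + 3. -/
theorem misclassification_phase_digit
    (n m : ℕ) (hm : 1 ≤ m) (hm' : m ≤ 2 ^ n - 1)
    (θ : ℝ) (hθ : θ = Real.arccos (Real.sqrt ((m : ℝ) / 2 ^ n)))
    (x : ℝ) (hx : x = 1 - θ / Real.pi)
    (l : ℕ) (hl : l = (n + 1) / 2 + 3) :
    ∃ i : ℕ, 2 ≤ i ∧ i ≤ l ∧ Odd ⌊(2 : ℝ) ^ i * x⌋ := by
  have hπ := Real.pi_pos
  set t := Real.sqrt ((m : ℝ) / 2 ^ n) with ht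
  have h2n : (0:ℝ) < 2 ^ n := by positivity
  have htpos : 0 < t := Real.sqrt_pos.mpr (by positivity)
  have hmlt : (m : ℝ) < 2 ^ n := by
    have : m < 2 ^ n := by
      have := Nat.one_le_two_pow (n := n)
      omega
    exact_mod_cast this
  have ht1 : t < 1 := by
    rw [ht, show (1:ℝ) = Real.sqrt 1 from Real.sqrt_one.symm]
    apply Real.sqrt_lt_sqrt (by positivity)
    rw [div_lt_one h2n]
    linarith
  have hθ' : θ = Real.pi / 2 - Real.arcsin t := by
    rw [hθ, Real.arccos_eq_pi_div_two_sub_arcsin]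
  have harc_pos : 0 < Real.arcsin t := Real.arcsin_pos.mpr htpos
  have harc_ge : t ≤ Real.arcsin t := by
    have hs := Real.sin_lt harc_pos
    rw [Real.sin_arcsin (by linarith) (le_of_lt ht1)] at hs
    linarith
  have harc_lt : Real.arcsin t < Real.pi / 2 := Real.arcsin_lt_pi_div_two.mpr ht1
  have hx' : x = 1/2 + Real.arcsin t / Real.pi := by
    rw [hx, hθ']
    field_simp
    ring
  have hx1 : x < 1 := by
    rw [hx']
    have : Real.arcsin t / Real.pi < 1/2 := by
      rw [div_lt_iff₀ hπ]
      linarith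
    linarith
  set c : ℕ := (n + 1) / 2 with hc
  have h2c : (0:ℝ) < 2 ^ c := by positivity
  have htlb : ((2:ℝ)^c)⁻¹ ≤ t := by
    rw [ht]
    rw [Real.le_sqrt (by positivity) (by positivity)]
    have hcm : (2:ℝ)^n ≤ ((2:ℝ)^c)^2 := by
      rw [← pow_mul]
      exact pow_le_pow_right₀ (by norm_num) (by omega)
    have hm1 : (1:ℝ) ≤ (m:ℝ) := by exact_mod_cast hm
    rw [inv_pow, ← one_div]
    exact div_le_div₀ (by linarith) hm1 h2n hcm
  apply digit_lemma x l (by omega) hx1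
  have hpowl : (2:ℝ)^l = 8 * 2^c := by
    rw [hl]
    rw [pow_add]
    ring
  have hpowl1 : (2:ℝ)^(l-1) = 4 * 2^c := by
    rw [show l - 1 = c + 2 by omega, pow_add]
    ring
  have hπ4 : Real.pi ≤ 4 := Real.pi_le_four
  have h8 : (8:ℝ) * 2^c * t ≥ 8 := by
    have : (2:ℝ)^c * t ≥ 1 := by
      have h := mul_le_mul_of_nonneg_left htlb (le_of_lt h2c)
      rwa [mul_inv_cancel₀ (ne_of_gt h2c)] at h
    nlinarith
  rw [hpowl, hpowl1, hx']
  have hkey : 8 * (2:ℝ)^c * (Real.arcsin t / Real.pi) ≥ 1 := by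
    rw [show (8:ℝ) * 2^c * (Real.arcsin t / Real.pi) = 8 * 2^c * Real.arcsin t / Real.pi by ring]
    rw [ge_iff_le, le_div_iff₀ hπ, one_mul]
    nlinarith [mul_le_mul_of_nonneg_left harc_ge (by positivity : (0:ℝ) ≤ 8 * 2^c)]
  nlinarith
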